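/- Define Φ : {(x, y, z, q) ∈ ℝ⁴ : x > 0} → ℂ² by Φ(x, y, z, q) = (z₁, z₂) with z₂ = (y + iz)/2 and z₁ = ½x² + (y² + z²)/4 + iq. Then Φ is a smooth diffeomorphism onto U' = {(z₁, z₂) ∈ ℂ² : z₁ + z̄₁ − 2z₂z̄₂ > 0}, and the pullback under Φ of the metric g = (v − 2z₂z̄₂)^{−1/2}(dz₁ − 2z̄₂dz₂)(dz̄₁ − 2z₂dz̄₂) + 4(v − 2z₂z̄₂)^{1/2} dz₂ dz̄₂ equals the Gibbons–Hawking form x(dx² + dy² + dz²) + (1/x)(½z dy − ½y dz + dq)². -/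

import Mathlib

noncomputable section

/-- `w(z₁,z₂) = v − 2z₂z̄₂` where `v = z₁ + z̄₁ = 2 Re z₁`. -/
def wDef (p : ℂ × ℂ) : ℝ := 2 * p.1.re - 2 * Complex.normSq p.2

/-- The region `U' = {(z₁,z₂) ∈ ℂ² : v − 2z₂z̄₂ > 0}`. -/
def Uprime : Set (ℂ × ℂ) := {p | 0 < wDef p}

/-- `K = log(v − 2z₂z̄₂)`. -/
def KDef (p : ℂ × ℂ) : ℝ := Real.log (wDef p)

/-- `K` as a function of `v` at fixed `z₂`. -/
def KofV (z₂ : ℂ) (v : ℝ) : ℝ := Real.log (v - 2 * Complex.normSq z₂)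

/-- `K_v = ∂K/∂v`. -/
def Kv (p : ℂ × ℂ) : ℝ := deriv (KofV p.2) (2 * p.1.re)

/-- `K_vv = ∂²K/∂v²`. -/
def Kvv (p : ℂ × ℂ) : ℝ := deriv (deriv (KofV p.2)) (2 * p.1.re)

/-- The Wirtinger derivative `∂G/∂z = ½(∂_x G − i ∂_y G)` of `G : ℂ → ℂ` at `c`. -/
def wirtD (G : ℂ → ℂ) (c : ℂ) : ℂ :=
  (deriv (fun x : ℝ => G ((x : ℂ) + (c.im : ℂ) * Complex.I)) c.re -
    Complex.I * deriv (fun y : ℝ => G ((c.re : ℂ) + (y : ℂ) * Complex.I)) c.im) / 2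

/-- The Wirtinger derivative `∂G/∂z̄ = ½(∂_x G + i ∂_y G)` of `G : ℂ → ℂ` at `c`. -/
def wirtDbar (G : ℂ → ℂ) (c : ℂ) : ℂ :=
  (deriv (fun x : ℝ => G ((x : ℂ) + (c.im : ℂ) * Complex.I)) c.re +
    Complex.I * deriv (fun y : ℝ => G ((c.re : ℂ) + (y : ℂ) * Complex.I)) c.im) / 2

/-- `K_{v2} = ∂²K/∂v∂z₂` (Wirtinger derivative in `z₂` of `K_v`). -/
def Kv2 (p : ℂ × ℂ) : ℂ :=
  wirtD (fun z₂ => ((deriv (KofV z₂) (2 * p.1.re) : ℝ) : ℂ)) p.2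

/-- `K_{v2̄} = ∂²K/∂v∂z̄₂`. -/
def Kv2bar (p : ℂ × ℂ) : ℂ :=
  wirtDbar (fun z₂ => ((deriv (KofV z₂) (2 * p.1.re) : ℝ) : ℂ)) p.2

/-- `K_{22̄} = ∂²K/∂z₂∂z̄₂` (at fixed `v`). -/
def K22bar (p : ℂ × ℂ) : ℂ :=
  wirtDbar (fun z₂ =>
    wirtD (fun u => ((Real.log (2 * p.1.re - 2 * Complex.normSq u) : ℝ) : ℂ)) z₂) p.2

/-- The 1-form `dz₁ − 2z̄₂dz₂` evaluated on a real tangent vector `X ∈ ℂ² ≅ ℝ⁴`. -/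
def AForm (p : ℂ × ℂ) (X : ℂ × ℂ) : ℂ := X.1 - 2 * starRingEnd ℂ p.2 * X.2

/-- The explicit Ricci-flat metric
`g = (v − 2z₂z̄₂)^{−1/2}(dz₁ − 2z̄₂dz₂)(dz̄₁ − 2z₂dz̄₂) + 4(v − 2z₂z̄₂)^{1/2} dz₂ dz̄₂`
(with `2αβ = α⊗β + β⊗α`) on real tangent vectors. -/
def gExpl (p : ℂ × ℂ) (X Y : ℂ × ℂ) : ℝ :=
  1 / Real.sqrt (wDef p) * (AForm p X * starRingEnd ℂ (AForm p Y)).re +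
    4 * Real.sqrt (wDef p) * (X.2 * starRingEnd ℂ Y.2).re

/-- The almost complex structure
`J⁺_{e^{iφ}} = 2Re{ i e^{iφ} [ (2(v − 2z₂z̄₂)^{1/2})^{−1}(dz₁ − 2z̄₂dz₂) ⊗ (∂_{z̄₂} + 2z₂∂_{z̄₁}) − 2(v − 2z₂z̄₂)^{1/2} dz₂ ⊗ ∂_{z̄₁} ] }`
as a real endomorphism of the tangent space `ℂ² ≅ ℝ⁴`: a real tangent vector `X`
corresponds to `X.1 ∂_{z₁} + conj X.1 ∂_{z̄₁} + X.2 ∂_{z₂} + conj X.2 ∂_{z̄₂}` in the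
complexified tangent space; the components below are the `∂_{z₁}`- and
`∂_{z₂}`-coefficients of `(T + T̄)(X)`. -/
def JExpl (φ : ℝ) (p : ℂ × ℂ) (X : ℂ × ℂ) : ℂ × ℂ :=
  (starRingEnd ℂ (Complex.I * Complex.exp ((φ : ℂ) * Complex.I) *
      (AForm p X / (2 * (Real.sqrt (wDef p) : ℂ)) * (2 * p.2) -
        2 * (Real.sqrt (wDef p) : ℂ) * X.2)),
   starRingEnd ℂ (Complex.I * Complex.exp ((φ : ℂ) * Complex.I) *
      (AForm p X / (2 * (Real.sqrt (wDef p) : ℂ)))))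

/-- The coordinate transformation `Φ(x,y,z,q) = (½x² + (y²+z²)/4 + iq, (y+iz)/2)`,
so that `x = (v − 2z₂z̄₂)^{1/2}`, `y = z₂ + z̄₂`, `z = i(z̄₂ − z₂)`, `q = (z₁−z̄₁)/(2i)`. -/
def PhiGH (p : ℝ × ℝ × ℝ × ℝ) : ℂ × ℂ :=
  (((p.1 ^ 2 / 2 + (p.2.1 ^ 2 + p.2.2.1 ^ 2) / 4 : ℝ) : ℂ) +
      ((p.2.2.2 : ℝ) : ℂ) * Complex.I,
   (((p.2.1 : ℝ) : ℂ) + ((p.2.2.1 : ℝ) : ℂ) * Complex.I) / 2)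

/-- The half-space `{x > 0}` in the `(x,y,z,q)`-coordinates. -/
def halfSpace : Set (ℝ × ℝ × ℝ × ℝ) := {p | 0 < p.1}

lemma contDiff_ofReal' : ContDiff ℝ (⊤ : ℕ∞) (Complex.ofReal) := Complex.ofRealCLM.contDiff

lemma wDef_PhiGH (p : ℝ × ℝ × ℝ × ℝ) : wDef (PhiGH p) = p.1 ^ 2 := by
  simp [wDef, PhiGH, Complex.normSq_apply, Complex.div_re, Complex.div_im, ← Complex.ofReal_pow]
  ring

lemma contDiff_PhiGH : ContDiff ℝ (⊤ : ℕ∞) PhiGH := by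
  have cd1 : ContDiff ℝ (⊤ : ℕ∞) (fun p : ℝ × ℝ × ℝ × ℝ => p.1 ^ 2 / 2 + (p.2.1 ^ 2 + p.2.2.1 ^ 2) / 4) := by
    apply ContDiff.add <;> apply ContDiff.div_const <;> fun_prop
  unfold PhiGH
  apply ContDiff.prodMk
  · exact (contDiff_ofReal'.comp cd1).add ((contDiff_ofReal'.comp (by fun_prop)).mul contDiff_const)
  · exact ((contDiff_ofReal'.comp (by fun_prop)).add
      ((contDiff_ofReal'.comp (by fun_prop)).mul contDiff_const)).div_const 2

lemma fderiv_PhiGH (p X : ℝ × ℝ × ℝ × ℝ) :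
    fderiv ℝ PhiGH p X =
      (((p.1 * X.1 + (p.2.1 * X.2.1 + p.2.2.1 * X.2.2.1) / 2 : ℝ) : ℂ) +
        ((X.2.2.2 : ℝ) : ℂ) * Complex.I,
       (((X.2.1 : ℝ) : ℂ) + ((X.2.2.1 : ℝ) : ℂ) * Complex.I) / 2) := by
  have hx : HasFDerivAt (fun p : ℝ × ℝ × ℝ × ℝ => p.1) (ContinuousLinearMap.fst ℝ ℝ (ℝ × ℝ × ℝ)) p := hasFDerivAt_fst
  have hy : HasFDerivAt (fun p : ℝ × ℝ × ℝ × ℝ => p.2.1) ((ContinuousLinearMap.fst ℝ ℝ (ℝ × ℝ)).comp (ContinuousLinearMap.snd ℝ ℝ (ℝ × ℝ × ℝ))) p := (hasFDerivAt_fst.comp p hasFDerivAt_snd)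
  have hz : HasFDerivAt (fun p : ℝ × ℝ × ℝ × ℝ => p.2.2.1) ((ContinuousLinearMap.fst ℝ ℝ ℝ).comp ((ContinuousLinearMap.snd ℝ ℝ (ℝ × ℝ)).comp (ContinuousLinearMap.snd ℝ ℝ (ℝ × ℝ × ℝ)))) p := (hasFDerivAt_fst.comp p (hasFDerivAt_snd.comp p hasFDerivAt_snd))
  have hq : HasFDerivAt (fun p : ℝ × ℝ × ℝ × ℝ => p.2.2.2) ((ContinuousLinearMap.snd ℝ ℝ ℝ).comp ((ContinuousLinearMap.snd ℝ ℝ (ℝ × ℝ)).comp (ContinuousLinearMap.snd ℝ ℝ (ℝ × ℝ × ℝ)))) p := (hasFDerivAt_snd.comp p (hasFDerivAt_snd.comp p hasFDerivAt_snd))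
  have hr' : HasFDerivAt (fun p : ℝ × ℝ × ℝ × ℝ => p.1 * p.1 * (1/2) + (p.2.1 * p.2.1 + p.2.2.1 * p.2.2.1) * (1/4)) _ p :=
    ((hx.mul hx).mul_const (1/2)).add (((hy.mul hy).add (hz.mul hz)).mul_const (1/4))
  have heq : (fun p : ℝ × ℝ × ℝ × ℝ => p.1 * p.1 * (1/2) + (p.2.1 * p.2.1 + p.2.2.1 * p.2.2.1) * (1/4)) =
      fun p : ℝ × ℝ × ℝ × ℝ => p.1 ^ 2 / 2 + (p.2.1 ^ 2 + p.2.2.1 ^ 2) / 4 := funext fun p => by ring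
  have hr := heq ▸ hr'
  have h1 : HasFDerivAt (fun p : ℝ × ℝ × ℝ × ℝ =>
      ((p.1 ^ 2 / 2 + (p.2.1 ^ 2 + p.2.2.1 ^ 2) / 4 : ℝ) : ℂ) + ((p.2.2.2 : ℝ) : ℂ) * Complex.I) _ p :=
    (Complex.ofRealCLM.hasFDerivAt.comp p hr).add
      ((Complex.ofRealCLM.hasFDerivAt.comp p hq).mul_const Complex.I)
  have h2' : HasFDerivAt (fun p : ℝ × ℝ × ℝ × ℝ =>
      ((((p.2.1 : ℝ) : ℂ) + ((p.2.2.1 : ℝ) : ℂ) * Complex.I)) * ((1:ℂ)/2)) _ p :=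
    ((Complex.ofRealCLM.hasFDerivAt.comp p hy).add
      ((Complex.ofRealCLM.hasFDerivAt.comp p hz).mul_const Complex.I)).mul_const ((1:ℂ)/2)
  have heq2 : (fun p : ℝ × ℝ × ℝ × ℝ =>
      ((((p.2.1 : ℝ) : ℂ) + ((p.2.2.1 : ℝ) : ℂ) * Complex.I)) * ((1:ℂ)/2)) =
      fun p : ℝ × ℝ × ℝ × ℝ =>
      (((p.2.1 : ℝ) : ℂ) + ((p.2.2.1 : ℝ) : ℂ) * Complex.I) / 2 := funext fun p => by ring
  have h2 := heq2 ▸ h2'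
  have hΦ : HasFDerivAt PhiGH _ p := h1.prodMk h2
  rw [hΦ.fderiv]
  simp [Complex.ext_iff]
  refine ⟨by ring, by ring, by ring⟩

/-- The inverse map. -/
def PsiGH (q : ℂ × ℂ) : ℝ × ℝ × ℝ × ℝ :=
  (Real.sqrt (wDef q), 2 * q.2.re, 2 * q.2.im, q.1.im)

lemma Psi_Phi (p : ℝ × ℝ × ℝ × ℝ) (hp : p ∈ halfSpace) : PsiGH (PhiGH p) = p := by
  have h1 : Real.sqrt (wDef (PhiGH p)) = p.1 := by
    rw [wDef_PhiGH]; exact Real.sqrt_sq hp.le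
  unfold PsiGH
  rw [h1]
  refine Prod.ext rfl (Prod.ext ?_ (Prod.ext ?_ ?_)) <;>
    simp [PhiGH, Complex.div_re, Complex.div_im, Complex.normSq_apply, ← Complex.ofReal_pow] <;> ring

lemma Phi_Psi (q : ℂ × ℂ) (hq : q ∈ Uprime) : PhiGH (PsiGH q) = q := by
  have hw : (0:ℝ) < wDef q := hq
  have h1 : Real.sqrt (wDef q) ^ 2 = wDef q := Real.sq_sqrt hw.le
  simp only [PhiGH, PsiGH]
  have hre : Real.sqrt (wDef q) ^ 2 / 2 + ((2 * q.2.re) ^ 2 + (2 * q.2.im) ^ 2) / 4 = q.1.re := by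
    rw [h1]; simp [wDef, Complex.normSq_apply]; ring
  rw [hre]
  refine Prod.ext ?_ ?_
  · simp [Complex.ext_iff]
  · simp [Complex.ext_iff]

lemma PhiGH_mapsTo : Set.MapsTo PhiGH halfSpace Uprime := fun p hp => by
  have h := wDef_PhiGH p
  simp only [Uprime, Set.mem_setOf_eq, h]
  have hx : 0 < p.1 := hp
  positivity

lemma contDiffOn_PsiGH : ContDiffOn ℝ (⊤ : ℕ∞) PsiGH Uprime := by
  apply ContDiffOn.prodMk
  · intro q hq
    apply ContDiffAt.contDiffWithinAt
    have hw : wDef q ≠ 0 := ne_of_gt hq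
    have hcd : ContDiffAt ℝ (⊤ : ℕ∞) wDef q := by
      have hwe : wDef = fun q : ℂ × ℂ => 2 * q.1.re - 2 * (q.2.re * q.2.re + q.2.im * q.2.im) :=
        funext fun q => by simp [wDef, Complex.normSq_apply]
      rw [hwe]
      exact (((contDiff_const.mul (Complex.reCLM.contDiff.comp contDiff_fst))).sub
        (contDiff_const.mul
          (((Complex.reCLM.contDiff.comp contDiff_snd).mul (Complex.reCLM.contDiff.comp contDiff_snd)).add
           ((Complex.imCLM.contDiff.comp contDiff_snd).mul (Complex.imCLM.contDiff.comp contDiff_snd))))).contDiffAt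
    exact (Real.contDiffAt_sqrt hw).comp q hcd
  · apply ContDiffOn.prodMk
    · exact ((contDiff_const.mul (Complex.reCLM.contDiff.comp contDiff_snd))).contDiffOn
    apply ContDiffOn.prodMk
    · exact ((contDiff_const.mul (Complex.imCLM.contDiff.comp contDiff_snd))).contDiffOn
    · exact (Complex.imCLM.contDiff.comp contDiff_fst).contDiffOn


/-- `Φ` is a smooth diffeomorphism from `{x > 0}` onto `U'`, and the
pullback of the explicit metric `g` under `Φ` is the Gibbons–Hawking metric
`x(dx² + dy² + dz²) + (1/x)(½z dy − ½y dz + dq)²`. -/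
theorem PhiGH_diffeo_pullback :
    ContDiff ℝ (⊤ : ℕ∞) PhiGH ∧
    Set.BijOn PhiGH halfSpace Uprime ∧
    (∃ Ψ : ℂ × ℂ → ℝ × ℝ × ℝ × ℝ, ContDiffOn ℝ (⊤ : ℕ∞) Ψ Uprime ∧
      (∀ p ∈ halfSpace, Ψ (PhiGH p) = p) ∧ (∀ q ∈ Uprime, PhiGH (Ψ q) = q)) ∧
    (∀ p ∈ halfSpace, ∀ X Y : ℝ × ℝ × ℝ × ℝ,
      gExpl (PhiGH p) (fderiv ℝ PhiGH p X) (fderiv ℝ PhiGH p Y) =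
        p.1 * (X.1 * Y.1 + X.2.1 * Y.2.1 + X.2.2.1 * Y.2.2.1) +
          1 / p.1 *
            ((p.2.2.1 / 2 * X.2.1 - p.2.1 / 2 * X.2.2.1 + X.2.2.2) *
              (p.2.2.1 / 2 * Y.2.1 - p.2.1 / 2 * Y.2.2.1 + Y.2.2.2))) := by
  refine ⟨contDiff_PhiGH, ?_, ⟨PsiGH, contDiffOn_PsiGH, Psi_Phi, Phi_Psi⟩, ?_⟩
  · refine ⟨PhiGH_mapsTo, fun a ha b hb hab => ?_, fun q hq => ?_⟩
    · have := congrArg PsiGH hab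
      rwa [Psi_Phi a ha, Psi_Phi b hb] at this
    · refine ⟨PsiGH q, ?_, Phi_Psi q hq⟩
      have hw : (0:ℝ) < wDef q := hq
      exact Real.sqrt_pos.mpr hw
  · intro p hp X Y
    have hp1 : 0 < p.1 := hp
    rw [fderiv_PhiGH p X, fderiv_PhiGH p Y]
    have hs : Real.sqrt (wDef (PhiGH p)) = p.1 := by
      rw [wDef_PhiGH]; exact Real.sqrt_sq hp1.le
    rw [gExpl, hs]
    simp [AForm, PhiGH, Complex.mul_re, Complex.add_re, Complex.add_im, Complex.mul_im,
      Complex.div_re, Complex.div_im, Complex.normSq_apply]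
    field_simp
    ring
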